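/- There is no perfect embezzlement protocol in the tensor product model for the maximally entangled state (1/√n) Σᵢ₌₁ⁿ eᵢ ⊗ eᵢ ∈ ℂⁿ ⊗ ℂᵐ (n ≤ m, n ≥ 2): there do not exist Hilbert spaces R_A, R_B, a unit vector ψ ∈ R_A ⊗ R_B, and unitaries U on ℂⁿ ⊗ R_A and V on R_B ⊗ ℂᵐ such that (U ⊗ I)(I ⊗ V)(e₁ ⊗ ψ ⊗ e₁) = (1/√n) Σᵢ eᵢ ⊗ ψ ⊗ eᵢ. -/

import Mathlib

open Matrix

lemma clm_zero_of_dense {H : Type*} [NormedAddCommGroup H] [InnerProductSpace ℂ H]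
    {s : Set H} (hdense : (Submodule.span ℂ s).topologicalClosure = ⊤)
    (f : H →L[ℂ] ℂ) (h0 : ∀ x ∈ s, f x = 0) (y : H) : f y = 0 := by
  have h1 : Submodule.span ℂ s ≤ f.ker :=
    Submodule.span_le.mpr fun x hx => h0 x hx
  have h2 : (Submodule.span ℂ s).topologicalClosure ≤ f.ker :=
    Submodule.topologicalClosure_minimal _ h1 (ContinuousLinearMap.isClosed_ker f)
  exact h2 (hdense ▸ Submodule.mem_top)

lemma col_isometry {n : ℕ} {RA : Type*} [NormedAddCommGroup RA] [InnerProductSpace ℂ RA]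
    [CompleteSpace RA]
    (U : Matrix (Fin n) (Fin n) (RA →L[ℂ] RA)) (hU₁ : Uᴴ * U = 1) (j : Fin n) (a a' : RA) :
    ∑ i, (inner ℂ (U i j a) (U i j a') : ℂ) = inner ℂ a a' := by
  have h : (Uᴴ * U) j j = (1 : Matrix (Fin n) (Fin n) (RA →L[ℂ] RA)) j j := by rw [hU₁]
  rw [Matrix.mul_apply, Matrix.one_apply_eq] at h
  simp only [Matrix.conjTranspose_apply] at h
  have h2 : ∀ i, (inner ℂ (U i j a) (U i j a') : ℂ)
      = inner ℂ a ((star (U i j) * U i j) a') := by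
    intro i
    rw [ContinuousLinearMap.mul_apply, ContinuousLinearMap.star_eq_adjoint,
      ContinuousLinearMap.adjoint_inner_right]
  simp only [h2]
  rw [← inner_sum]
  congr 1
  calc ∑ i, (star (U i j) * U i j) a' = (∑ i, star (U i j) * U i j) a' := by
        rw [ContinuousLinearMap.sum_apply]
    _ = a' := by rw [h]; rfl

/-- there is no perfect embezzlement protocol in the tensor product model
for the maximally entangled state `(1/√n) ∑ᵢ eᵢ ⊗ eᵢ ∈ ℂⁿ ⊗ ℂᵐ` (`2 ≤ n ≤ m`).

Encoding: `RA`, `RB` are the resource Hilbert spaces and `H` plays the role of the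
Hilbert space tensor product `RA ⊗ RB`, presented by a bilinear map `γ` satisfying
`⟨γ a b, γ a' b'⟩ = ⟨a,a'⟩⟨b,b'⟩` whose range has dense span.  The unitary `U` on
`ℂⁿ ⊗ RA` is given by its block entries `U i j : RA →L RA` (unitarity being
`Uᴴ * U = 1 = U * Uᴴ`), and similarly `V` on `RB ⊗ ℂᵐ`; `W i j k l : H →L H` is the
operator `U_{ij} ⊗ V_{kl}` on `H = RA ⊗ RB`.  The embezzlement equation
`(U ⊗ I)(I ⊗ V)(e₁ ⊗ ψ ⊗ e₁) = (1/√n) ∑ᵢ eᵢ ⊗ ψ ⊗ eᵢ` reads blockwise as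
`W i 0 k 0 ψ = (δ_{ik}/√n) • ψ`, and the theorem says it cannot hold. -/
theorem no_perfect_embezzlement_tensor_model (n m : ℕ) (hn : 2 ≤ n) (hnm : n ≤ m)
    {RA RB H : Type*}
    [NormedAddCommGroup RA] [InnerProductSpace ℂ RA] [CompleteSpace RA]
    [NormedAddCommGroup RB] [InnerProductSpace ℂ RB] [CompleteSpace RB]
    [NormedAddCommGroup H] [InnerProductSpace ℂ H] [CompleteSpace H]
    (γ : RA →ₗ[ℂ] RB →ₗ[ℂ] H)
    (hγ : ∀ (a a' : RA) (b b' : RB),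
      (inner ℂ (γ a b) (γ a' b') : ℂ) = (inner ℂ a a' : ℂ) * (inner ℂ b b' : ℂ))
    (hdense : (Submodule.span ℂ {h : H | ∃ a b, h = γ a b}).topologicalClosure = ⊤)
    (ψ : H) (hψ : ‖ψ‖ = 1)
    (U : Matrix (Fin n) (Fin n) (RA →L[ℂ] RA))
    (hU₁ : Uᴴ * U = 1) (hU₂ : U * Uᴴ = 1)
    (V : Matrix (Fin m) (Fin m) (RB →L[ℂ] RB))
    (hV₁ : Vᴴ * V = 1) (hV₂ : V * Vᴴ = 1)
    (W : Fin n → Fin n → Fin m → Fin m → (H →L[ℂ] H))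
    (hW : ∀ (i j : Fin n) (k l : Fin m) (a : RA) (b : RB),
      W i j k l (γ a b) = γ (U i j a) (V k l b)) :
    ¬ (∀ (i : Fin n) (k : Fin m),
        W i ⟨0, by omega⟩ k ⟨0, by omega⟩ ψ =
          (if (i : ℕ) = (k : ℕ) then ((Real.sqrt n : ℂ))⁻¹ else 0) • ψ) := by
  intro hemb
  set i0 : Fin n := ⟨0, by omega⟩ with hi0
  set k0 : Fin m := ⟨0, by omega⟩ with hk0
  -- norm of γ a b
  have hγnorm : ∀ (a : RA) (b : RB), ‖γ a b‖ = ‖a‖ * ‖b‖ := by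
    intro a b
    have h0 := hγ a a b b
    rw [inner_self_eq_norm_sq_to_K, inner_self_eq_norm_sq_to_K, inner_self_eq_norm_sq_to_K] at h0
    rw [← RCLike.ofReal_pow, ← RCLike.ofReal_pow, ← RCLike.ofReal_pow, ← RCLike.ofReal_mul,
      RCLike.ofReal_inj] at h0
    have h3 : (‖γ a b‖ : ℝ) ^ 2 = (‖a‖ * ‖b‖) ^ 2 := by rw [h0]; ring
    have h4 : 0 ≤ ‖a‖ * ‖b‖ := mul_nonneg (norm_nonneg _) (norm_nonneg _)
    nlinarith [norm_nonneg (γ a b)]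
  -- set of overlaps with product vectors (Schmidt coefficients candidates)
  set S : Set ℝ := {r | ∃ a b, ‖a‖ ≤ 1 ∧ ‖b‖ ≤ 1 ∧ r = ‖(inner ℂ (γ a b) ψ : ℂ)‖} with hS
  have h0S : (0 : ℝ) ∈ S := ⟨0, 0, by simp, by simp, by simp⟩
  have hSne : S.Nonempty := ⟨0, h0S⟩
  have hSbdd : BddAbove S := by
    refine ⟨1, ?_⟩
    rintro r ⟨a, b, ha, hb, rfl⟩
    calc ‖(inner ℂ (γ a b) ψ : ℂ)‖ ≤ ‖γ a b‖ * ‖ψ‖ := norm_inner_le_norm _ _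
      _ = ‖a‖ * ‖b‖ := by rw [hγnorm, hψ, mul_one]
      _ ≤ 1 * 1 := mul_le_mul ha hb (norm_nonneg _) zero_le_one
      _ = 1 := by ring
  set s : ℝ := sSup S with hs
  have hs0 : 0 ≤ s := le_csSup hSbdd h0S
  have hmem : ∀ (a : RA) (b : RB), ‖a‖ ≤ 1 → ‖b‖ ≤ 1 →
      ‖(inner ℂ (γ a b) ψ : ℂ)‖ ≤ s := by
    intro a b ha hb
    exact le_csSup hSbdd ⟨a, b, ha, hb, rfl⟩
  -- homogeneous form of the bound
  have key : ∀ (a : RA) (b : RB), ‖(inner ℂ (γ a b) ψ : ℂ)‖ ≤ s * (‖a‖ * ‖b‖) := by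
    intro a b
    rcases eq_or_ne a 0 with rfl | ha
    · simp
    rcases eq_or_ne b 0 with rfl | hb
    · simp
    have hna : 0 < ‖a‖ := norm_pos_iff.mpr ha
    have hnb : 0 < ‖b‖ := norm_pos_iff.mpr hb
    have h1 : ‖((‖a‖ : ℂ))⁻¹ • a‖ ≤ 1 := by
      rw [norm_smul]
      simp [hna.le, abs_of_nonneg, inv_mul_cancel₀ hna.ne']
    have h2 : ‖((‖b‖ : ℂ))⁻¹ • b‖ ≤ 1 := by
      rw [norm_smul]
      simp [hnb.le, abs_of_nonneg, inv_mul_cancel₀ hnb.ne']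
    have h3 := hmem _ _ h1 h2
    have h4 : γ (((‖a‖ : ℂ))⁻¹ • a) (((‖b‖ : ℂ))⁻¹ • b)
        = (((‖a‖ : ℂ))⁻¹ * ((‖b‖ : ℂ))⁻¹) • γ a b := by
      rw [LinearMap.map_smul γ, LinearMap.smul_apply, LinearMap.map_smul, smul_smul]
    rw [h4, inner_smul_left] at h3
    rw [norm_mul] at h3
    have h5 : ‖(starRingEnd ℂ) (((‖a‖ : ℂ))⁻¹ * ((‖b‖ : ℂ))⁻¹)‖ = ‖a‖⁻¹ * ‖b‖⁻¹ := by
      rw [RingHomIsometric.norm_map]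
      rw [norm_mul]
      simp [abs_of_nonneg, hna.le, hnb.le]
    rw [h5] at h3
    calc ‖(inner ℂ (γ a b) ψ : ℂ)‖
        = (‖a‖ * ‖b‖) * ((‖a‖⁻¹ * ‖b‖⁻¹) * ‖(inner ℂ (γ a b) ψ : ℂ)‖) := by
          field_simp
      _ ≤ (‖a‖ * ‖b‖) * s := by
          apply mul_le_mul_of_nonneg_left _ (by positivity)
          rw [mul_comm (‖a‖⁻¹) (‖b‖⁻¹)] at h3
          calc ‖a‖⁻¹ * ‖b‖⁻¹ * ‖(inner ℂ (γ a b) ψ : ℂ)‖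
              = ‖b‖⁻¹ * ‖a‖⁻¹ * ‖(inner ℂ (γ a b) ψ : ℂ)‖ := by ring
            _ ≤ s := h3
      _ = s * (‖a‖ * ‖b‖) := by ring
  -- s is positive
  have hspos : 0 < s := by
    rcases lt_or_eq_of_le hs0 with h | h
    · exact h
    exfalso
    have hz : ∀ (a : RA) (b : RB), (inner ℂ ψ (γ a b) : ℂ) = 0 := by
      intro a b
      have h1 := key a b
      rw [← h] at h1
      have h2 : ‖(inner ℂ (γ a b) ψ : ℂ)‖ ≤ 0 := by
        calc ‖(inner ℂ (γ a b) ψ : ℂ)‖ ≤ 0 * (‖a‖ * ‖b‖) := h1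
          _ = 0 := by ring
      have h3 : (inner ℂ (γ a b) ψ : ℂ) = 0 :=
        norm_le_zero_iff.mp h2
      rw [← inner_conj_symm, h3, map_zero]
    have h4 : (innerSL ℂ ψ : H →L[ℂ] ℂ) ψ = 0 := by
      apply clm_zero_of_dense hdense
      rintro x ⟨a, b, rfl⟩
      exact hz a b
    have h5 : (inner ℂ ψ ψ : ℂ) = 0 := h4
    rw [inner_self_eq_norm_sq_to_K, hψ] at h5
    norm_num at h5
  -- the key identity coming from unitarity and density
  have hid : ∀ (a : RA) (b : RB), (inner ℂ (γ a b) ψ : ℂ)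
      = ∑ i : Fin n, ∑ k : Fin m,
          (if (i : ℕ) = (k : ℕ) then ((Real.sqrt n : ℂ))⁻¹ else 0)
            * (inner ℂ (γ (U i i0 a) (V k k0 b)) ψ : ℂ) := by
    intro a b
    set f : H →L[ℂ] ℂ :=
      (∑ i : Fin n, ∑ k : Fin m,
        (innerSL ℂ (W i i0 k k0 (γ a b))).comp (W i i0 k k0)) - innerSL ℂ (γ a b) with hf
    have hfz : ∀ y : H, f y = 0 := by
      apply clm_zero_of_dense hdense
      rintro x ⟨a', b', rfl⟩
      rw [hf]
      simp only [ContinuousLinearMap.sub_apply, ContinuousLinearMap.sum_apply,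
        ContinuousLinearMap.comp_apply, innerSL_apply_apply]
      rw [sub_eq_zero]
      have hterm : ∀ (i : Fin n) (k : Fin m),
          (inner ℂ (W i i0 k k0 (γ a b)) (W i i0 k k0 (γ a' b')) : ℂ)
          = (inner ℂ (U i i0 a) (U i i0 a') : ℂ) * (inner ℂ (V k k0 b) (V k k0 b') : ℂ) := by
        intro i k
        rw [hW, hW, hγ]
      calc ∑ i : Fin n, ∑ k : Fin m,
            (inner ℂ (W i i0 k k0 (γ a b)) (W i i0 k k0 (γ a' b')) : ℂ)
          = ∑ i : Fin n, ∑ k : Fin m,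
            (inner ℂ (U i i0 a) (U i i0 a') : ℂ) * (inner ℂ (V k k0 b) (V k k0 b') : ℂ) := by
            exact Finset.sum_congr rfl fun i _ => Finset.sum_congr rfl fun k _ => hterm i k
        _ = (∑ i : Fin n, (inner ℂ (U i i0 a) (U i i0 a') : ℂ))
              * (∑ k : Fin m, (inner ℂ (V k k0 b) (V k k0 b') : ℂ)) := by
            rw [Finset.sum_mul]
            exact Finset.sum_congr rfl fun i _ => by rw [Finset.mul_sum]
        _ = (inner ℂ a a' : ℂ) * (inner ℂ b b' : ℂ) := by
            rw [col_isometry U hU₁ i0 a a', col_isometry V hV₁ k0 b b']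
        _ = inner ℂ (γ a b) (γ a' b') := (hγ a a' b b').symm
    have h6 := hfz ψ
    rw [hf] at h6
    simp only [ContinuousLinearMap.sub_apply, ContinuousLinearMap.sum_apply,
      ContinuousLinearMap.comp_apply, innerSL_apply_apply] at h6
    rw [sub_eq_zero] at h6
    rw [← h6]
    refine Finset.sum_congr rfl fun i _ => Finset.sum_congr rfl fun k _ => ?_
    rw [hemb i k, hW, inner_smul_right]
  -- the contradictory bound : s ≤ s / √n
  have claim : s ≤ s * (Real.sqrt n)⁻¹ := by
    apply csSup_le hSne
    rintro r ⟨a, b, ha, hb, rfl⟩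
    set ι : Fin n → Fin m := fun i => ⟨(i : ℕ), lt_of_lt_of_le i.isLt hnm⟩ with hι
    have hιinj : Function.Injective ι := by
      intro i j hij
      have h1 : (ι i : ℕ) = (ι j : ℕ) := congrArg Fin.val hij
      simp only [hι] at h1
      exact Fin.ext h1
    have hsingle : ∀ i : Fin n, ∑ k : Fin m,
        (if (i : ℕ) = (k : ℕ) then ((Real.sqrt n : ℂ))⁻¹ else 0)
          * (inner ℂ (γ (U i i0 a) (V k k0 b)) ψ : ℂ)
        = ((Real.sqrt n : ℂ))⁻¹ * (inner ℂ (γ (U i i0 a) (V (ι i) k0 b)) ψ : ℂ) := by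
      intro i
      rw [Finset.sum_eq_single (ι i)]
      · simp [hι]
      · intro k _ hk
        have : ¬ ((i : ℕ) = (k : ℕ)) := by
          intro hc
          apply hk
          apply Fin.ext
          simp [hι, ← hc]
        simp [this]
      · intro hk
        exact absurd (Finset.mem_univ _) hk
    have hUsq : ∑ i : Fin n, ‖U i i0 a‖ ^ 2 = ‖a‖ ^ 2 := by
      have h := col_isometry U hU₁ i0 a a
      simp only [inner_self_eq_norm_sq_to_K, ← RCLike.ofReal_pow] at h
      exact_mod_cast h
    have hVsq : ∑ k : Fin m, ‖V k k0 b‖ ^ 2 = ‖b‖ ^ 2 := by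
      have h := col_isometry V hV₁ k0 b b
      simp only [inner_self_eq_norm_sq_to_K, ← RCLike.ofReal_pow] at h
      exact_mod_cast h
    have hVι : ∑ i : Fin n, ‖V (ι i) k0 b‖ ^ 2 ≤ ‖b‖ ^ 2 := by
      have himg : ∑ i : Fin n, ‖V (ι i) k0 b‖ ^ 2
          = ∑ k ∈ Finset.univ.image ι, ‖V k k0 b‖ ^ 2 := by
        rw [Finset.sum_image (fun x _ y _ h => hιinj h)]
      rw [himg, ← hVsq]
      exact Finset.sum_le_sum_of_subset_of_nonneg (Finset.subset_univ _)
        (fun k _ _ => by positivity)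
    have hCS : ∑ i : Fin n, ‖U i i0 a‖ * ‖V (ι i) k0 b‖ ≤ 1 := by
      have h1 := Finset.sum_mul_sq_le_sq_mul_sq Finset.univ
        (fun i : Fin n => ‖U i i0 a‖) (fun i => ‖V (ι i) k0 b‖)
      have h2 : (∑ i : Fin n, ‖U i i0 a‖ * ‖V (ι i) k0 b‖) ^ 2 ≤ 1 := by
        calc (∑ i : Fin n, ‖U i i0 a‖ * ‖V (ι i) k0 b‖) ^ 2
            ≤ (∑ i : Fin n, ‖U i i0 a‖ ^ 2) * (∑ i : Fin n, ‖V (ι i) k0 b‖ ^ 2) := h1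
          _ ≤ ‖a‖ ^ 2 * ‖b‖ ^ 2 := by
              apply mul_le_mul (le_of_eq hUsq) hVι (by positivity) (by positivity)
          _ ≤ 1 * 1 := by
              have ha2 : ‖a‖ ^ 2 ≤ 1 := by nlinarith [norm_nonneg a]
              have hb2 : ‖b‖ ^ 2 ≤ 1 := by nlinarith [norm_nonneg b]
              exact mul_le_mul ha2 hb2 (by positivity) zero_le_one
          _ = 1 := by ring
      have h3 : 0 ≤ ∑ i : Fin n, ‖U i i0 a‖ * ‖V (ι i) k0 b‖ :=
        Finset.sum_nonneg fun i _ => by positivity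
      nlinarith
    have hcnorm : ‖((Real.sqrt n : ℂ))⁻¹‖ = (Real.sqrt n)⁻¹ := by
      rw [norm_inv, Complex.norm_real, Real.norm_eq_abs,
        abs_of_nonneg (Real.sqrt_nonneg _)]
    calc ‖(inner ℂ (γ a b) ψ : ℂ)‖
        = ‖∑ i : Fin n, ((Real.sqrt n : ℂ))⁻¹
            * (inner ℂ (γ (U i i0 a) (V (ι i) k0 b)) ψ : ℂ)‖ := by
          rw [hid a b]
          congr 1
          exact Finset.sum_congr rfl fun i _ => hsingle i
      _ ≤ ∑ i : Fin n, ‖((Real.sqrt n : ℂ))⁻¹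
            * (inner ℂ (γ (U i i0 a) (V (ι i) k0 b)) ψ : ℂ)‖ := norm_sum_le _ _
      _ = ∑ i : Fin n, (Real.sqrt n)⁻¹
            * ‖(inner ℂ (γ (U i i0 a) (V (ι i) k0 b)) ψ : ℂ)‖ := by
          refine Finset.sum_congr rfl fun i _ => ?_
          rw [norm_mul, hcnorm]
      _ ≤ ∑ i : Fin n, (Real.sqrt n)⁻¹
            * (s * (‖U i i0 a‖ * ‖V (ι i) k0 b‖)) := by
          refine Finset.sum_le_sum fun i _ => ?_
          exact mul_le_mul_of_nonneg_left (key _ _)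
            (inv_nonneg.mpr (Real.sqrt_nonneg _))
      _ = (Real.sqrt n)⁻¹ * s * (∑ i : Fin n, ‖U i i0 a‖ * ‖V (ι i) k0 b‖) := by
          rw [Finset.mul_sum]
          exact Finset.sum_congr rfl fun i _ => by ring
      _ ≤ (Real.sqrt n)⁻¹ * s * 1 := by
          apply mul_le_mul_of_nonneg_left hCS (by positivity)
      _ = s * (Real.sqrt n)⁻¹ := by ring
  -- conclusion
  have hsq : (1 : ℝ) < Real.sqrt n := by
    have h1 : (1 : ℝ) < (n : ℝ) := by exact_mod_cast lt_of_lt_of_le one_lt_two hn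
    calc (1 : ℝ) = Real.sqrt 1 := by simp
      _ < Real.sqrt n := Real.sqrt_lt_sqrt zero_le_one h1
  have hle : (1 : ℝ) ≤ (Real.sqrt n)⁻¹ := by
    have h1' : s * 1 ≤ s * (Real.sqrt n)⁻¹ := by simpa using claim
    exact (mul_le_mul_iff_right₀ hspos).mp h1'
  have h2 : (Real.sqrt n)⁻¹ < 1 := inv_lt_one_of_one_lt₀ hsq
  linarith
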